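/- For r ∈ ℕ, N ∈ ℕ, θ > 0, and disjoint increasing tuples with all m^{(s)} ≥ M for some large M, the joint block probability satisfies the two-sided bound: θ^r ∏_{s=1}^r N!/(θ + m^{(s)})^{N+1} ≤ P{⋂_{s=1}^r A(k₁^{(s)},...,k_N^{(s)}, m^{(s)})} ≤ θ^r ∏_{s=1}^r N!/(θ + m^{(s)} − (r+1)N − 1)^{N+1}, whenever θ + m^{(s)} − (r+1)N − 1 > 0 for all s. -/

import Mathlib

open MeasureTheory ProbabilityTheory Finset

/-- The event that, in the Chinese restaurant process built from the attachment
variables `I`, the set `{k 0, …, k N}` (with `k 0 < … < k N = m`) is a block of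
the partition `P_m` at step `m`. -/
def crpBlockEvent {Ω : Type*} (I : ℕ → Ω → ℕ) {N : ℕ} (k : Fin (N + 1) → ℕ) : Set Ω :=
  {ω | I (k 0) ω = k 0 ∧
    (∀ p : Fin (N + 1), p ≠ 0 → ∃ q, q < p ∧ I (k p) ω = k q) ∧
    (∀ i : ℕ, k 0 < i → i ≤ k (Fin.last N) → (∀ p, k p ≠ i) →
      ∀ q : Fin (N + 1), (k q : ℕ) < i → I i ω ≠ k q)}

section CRPAux

open Finset

variable {r N : ℕ}

/-- All block values, as a finset. -/
def crpB (k : Fin r → Fin (N + 1) → ℕ) : Finset ℕ :=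
  univ.image (fun sp : Fin r × Fin (N + 1) => k sp.1 sp.2)

/-- The number of block elements below `i` whose block is still active at time `i`. -/
def crpc (k : Fin r → Fin (N + 1) → ℕ) (i : ℕ) : ℕ :=
  (univ.filter (fun sp : Fin r × Fin (N + 1) =>
    k sp.1 sp.2 < i ∧ i ≤ k sp.1 (Fin.last N))).card

/-- Per-coordinate constraints of the joint block event at a block coordinate. -/
def crpU (k : Fin r → Fin (N + 1) → ℕ) (i : ℕ) : Set ℕ :=
  {v | (∀ s, k s 0 = i → v = i) ∧
    (∀ s (p : Fin (N + 1)), p ≠ 0 → k s p = i → ∃ q, q < p ∧ v = k s q)}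

/-- Full per-coordinate constraints of the joint block event. -/
def crpS (k : Fin r → Fin (N + 1) → ℕ) (i : ℕ) : Set ℕ :=
  crpU k i ∩ {v | (∀ s p, k s p ≠ i) → ∀ s (q : Fin (N + 1)), (k s q : ℕ) < i →
      i ≤ k s (Fin.last N) → v ≠ k s q}

lemma val_inj (k : Fin r → Fin (N + 1) → ℕ)
    (hdisj : ∀ s p s' p', k s p = k s' p' → s = s' ∧ p = p') :
    Function.Injective (fun sp : Fin r × Fin (N + 1) => k sp.1 sp.2) := by
  rintro ⟨s, p⟩ ⟨s', p'⟩ h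
  obtain ⟨h1, h2⟩ := hdisj s p s' p' h
  simp [Prod.ext_iff, h1, h2]

lemma kval_one_le (k : Fin r → Fin (N + 1) → ℕ) (hpos : ∀ s, 1 ≤ k s 0)
    (hmono : ∀ s, StrictMono (k s)) (s : Fin r) (p : Fin (N + 1)) : 1 ≤ k s p :=
  le_trans (hpos s) ((hmono s).monotone (Fin.zero_le _))

lemma crpc_le (k : Fin r → Fin (N + 1) → ℕ)
    (hdisj : ∀ s p s' p', k s p = k s' p' → s = s' ∧ p = p')
    (hpos : ∀ s, 1 ≤ k s 0) (hmono : ∀ s, StrictMono (k s)) (i : ℕ) :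
    crpc k i + 1 ≤ i ∨ crpc k i = 0 := by
  rcases Nat.eq_zero_or_pos (crpc k i) with h | h
  · exact Or.inr h
  · left
    have hle : crpc k i ≤ (Icc 1 (i-1)).card := by
      apply Finset.card_le_card_of_injOn (fun sp => k sp.1 sp.2)
      · intro sp hsp
        simp only [crpc, mem_coe, mem_filter, mem_univ, true_and] at hsp
        have h1 : 1 ≤ k sp.1 sp.2 := kval_one_le k hpos hmono _ _
        simp only [mem_coe, mem_Icc]
        omega
      · exact (val_inj k hdisj).injOn
    rw [Nat.card_Icc] at hle
    obtain ⟨sp, hsp⟩ := Finset.card_pos.mp h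
    simp only [crpc, mem_filter, mem_univ, true_and] at hsp
    have h1 : 1 ≤ k sp.1 sp.2 := kval_one_le k hpos hmono _ _
    omega

lemma count_key (k : Fin r → Fin (N + 1) → ℕ)
    (hdisj : ∀ s p s' p', k s p = k s' p' → s = s' ∧ p = p')
    (hpos : ∀ s, 1 ≤ k s 0) (hmono : ∀ s, StrictMono (k s))
    (M : ℕ) (x : ℕ) :
    (((Icc 1 M) \ crpB k).filter (fun i => i - crpc k i ≤ x)).card +
      (univ.filter (fun sp : Fin r × Fin (N + 1) =>
        k sp.1 (Fin.last N) + 1 ≤ x)).card ≤ x := by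
  classical
  set D := (Icc 1 M) \ crpB k with hD
  set F := D.filter (fun i => i - crpc k i ≤ x) with hF
  set W := F.filter (fun i => x < i) with hWdef
  set WL := F.filter (fun i => ¬ x < i) with hWLdef
  have hsplit : W.card + WL.card = F.card :=
    Finset.card_filter_add_card_filter_not _
  set dead := univ.filter (fun sp : Fin r × Fin (N + 1) => k sp.1 (Fin.last N) + 1 ≤ x) with hdead
  set alow := univ.filter (fun sp : Fin r × Fin (N + 1) =>
      x ≤ k sp.1 (Fin.last N) ∧ k sp.1 sp.2 ≤ x) with halow
  have hWL : WL.card ≤ ((Icc 1 x) \ crpB k).card := by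
    apply Finset.card_le_card
    intro i hi
    simp only [hWLdef, hF, hD, mem_filter, mem_sdiff, mem_Icc, not_lt] at hi ⊢
    obtain ⟨⟨⟨⟨h1, _⟩, hB⟩, _⟩, h2⟩ := hi
    exact ⟨⟨h1, h2⟩, hB⟩
  have hdisjda : Disjoint dead alow := by
    rw [Finset.disjoint_left]
    intro sp hsp1 hsp2
    simp only [hdead, halow, mem_filter, mem_univ, true_and] at hsp1 hsp2
    omega
  have hdeadalow : dead.card + alow.card ≤ ((Icc 1 x) ∩ crpB k).card := by
    rw [← Finset.card_union_of_disjoint hdisjda]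
    rw [← Finset.card_image_of_injOn ((val_inj k hdisj).injOn (s := ↑(dead ∪ alow)))]
    apply Finset.card_le_card
    intro v hv
    simp only [mem_image, mem_union, hdead, halow, mem_filter, mem_univ, true_and] at hv
    obtain ⟨sp, hsp, rfl⟩ := hv
    have h1 : 1 ≤ k sp.1 sp.2 := kval_one_le k hpos hmono _ _
    have h2 : k sp.1 sp.2 ≤ k sp.1 (Fin.last N) := (hmono sp.1).monotone (Fin.le_last _)
    simp only [mem_inter, mem_Icc, crpB, mem_image, mem_univ, true_and]
    refine ⟨⟨h1, by omega⟩, ⟨sp, rfl⟩⟩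
  have hWalow : W.card ≤ alow.card := by
    rcases Finset.eq_empty_or_nonempty W with he | hne
    · simp [he]
    · set i0 := W.max' hne with hi0
      have hi0W : i0 ∈ W := W.max'_mem hne
      have hi0prop : (x < i0) ∧ i0 ∉ crpB k ∧ i0 - crpc k i0 ≤ x := by
        have := hi0W
        simp only [hWdef, hF, hD, mem_filter, mem_sdiff, mem_Icc] at this
        exact ⟨this.2, this.1.1.2, this.1.2⟩
      obtain ⟨hxi0, hi0B, hi0c⟩ := hi0prop
      set cP := univ.filter (fun sp : Fin r × Fin (N + 1) =>
        k sp.1 sp.2 < i0 ∧ i0 ≤ k sp.1 (Fin.last N)) with hcP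
      have hcPcard : cP.card = crpc k i0 := rfl
      set c1 := cP.filter (fun sp => k sp.1 sp.2 ≤ x) with hc1
      set c2 := cP.filter (fun sp => ¬ k sp.1 sp.2 ≤ x) with hc2
      have hc12 : c1.card + c2.card = crpc k i0 :=
        Finset.card_filter_add_card_filter_not _
      have hc1sub : c1.card ≤ alow.card := by
        apply Finset.card_le_card
        intro sp hsp
        simp only [hc1, hcP, halow, mem_filter, mem_univ, true_and] at hsp ⊢
        omega
      have hc2le : c2.card ≤ ((Ioo x i0) ∩ crpB k).card := by
        rw [← Finset.card_image_of_injOn ((val_inj k hdisj).injOn (s := ↑c2))]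
        apply Finset.card_le_card
        intro v hv
        simp only [mem_image, hc2, hcP, mem_filter, mem_univ, true_and] at hv
        obtain ⟨sp, hsp, rfl⟩ := hv
        simp only [mem_inter, mem_Ioo, crpB, mem_image, mem_univ, true_and]
        exact ⟨⟨by omega, hsp.1.1⟩, ⟨sp, rfl⟩⟩
      have hIoo : ((Ioo x i0) \ crpB k).card + ((Ioo x i0) ∩ crpB k).card = i0 - x - 1 := by
        rw [Finset.card_sdiff_add_card_inter, Nat.card_Ioo]
      have herase : (W.erase i0).card ≤ ((Ioo x i0) \ crpB k).card := by
        apply Finset.card_le_card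
        intro i hi
        have hiW := Finset.mem_of_mem_erase hi
        have hine := Finset.ne_of_mem_erase hi
        have hilt : i < i0 := lt_of_le_of_ne (W.le_max' i hiW) hine
        simp only [hWdef, hF, hD, mem_filter, mem_sdiff, mem_Icc] at hiW
        simp only [mem_sdiff, mem_Ioo]
        exact ⟨⟨hiW.2, hilt⟩, hiW.1.1.2⟩
      have hWcard : W.card ≤ (W.erase i0).card + 1 := by
        rw [Finset.card_erase_of_mem hi0W]
        omega
      omega
  have hIccx : ((Icc 1 x) \ crpB k).card + ((Icc 1 x) ∩ crpB k).card = x := by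
    rw [Finset.card_sdiff_add_card_inter, Nat.card_Icc]
    omega
  omega

lemma count_key_up (k : Fin r → Fin (N + 1) → ℕ)
    (hdisj : ∀ s p s' p', k s p = k s' p' → s = s' ∧ p = p')
    (hpos : ∀ s, 1 ≤ k s 0) (hmono : ∀ s, StrictMono (k s))
    (M : ℕ) (hM : ∀ s, k s (Fin.last N) ≤ M) (x : ℕ) (hx : 1 ≤ x) (hxM : x ≤ M) :
    (((Icc 1 M) \ crpB k).filter (fun i => x + crpc k i ≤ i)).card +
      (univ.filter (fun sp : Fin r × Fin (N + 1) =>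
        x + (r + 1) * N ≤ k sp.1 (Fin.last N))).card + x ≤ M + 1 := by
  classical
  set RN := (r + 1) * N with hRN
  set B := crpB k with hB
  set G := ((Icc 1 M) \ B).filter (fun i => x + crpc k i ≤ i) with hG
  set NB := (Icc x M) \ B with hNB
  set BL := (Icc x M) ∩ B with hBL
  set bad := NB.filter (fun i => ¬ (x + crpc k i ≤ i)) with hbad
  set HighP := univ.filter (fun sp : Fin r × Fin (N + 1) =>
    x + RN ≤ k sp.1 (Fin.last N)) with hHighP
  set HPhi := HighP.filter (fun sp => x ≤ k sp.1 sp.2) with hHPhi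
  set HPlo := HighP.filter (fun sp => ¬ x ≤ k sp.1 sp.2) with hHPlo
  set LPx := univ.filter (fun sp : Fin r × Fin (N + 1) =>
    ¬ (x + RN ≤ k sp.1 (Fin.last N)) ∧ x ≤ k sp.1 sp.2 ∧ k sp.1 sp.2 ≤ M) with hLPx
  have hNBBL : NB.card + BL.card = M + 1 - x := by
    rw [hNB, hBL, Finset.card_sdiff_add_card_inter, Nat.card_Icc]
  have hGNB : G = NB.filter (fun i => x + crpc k i ≤ i) := by
    ext i
    simp only [hG, hNB, mem_filter, mem_sdiff, mem_Icc]
    constructor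
    · rintro ⟨⟨⟨h1, h2⟩, h3⟩, h4⟩
      exact ⟨⟨⟨by omega, h2⟩, h3⟩, h4⟩
    · rintro ⟨⟨⟨h1, h2⟩, h3⟩, h4⟩
      exact ⟨⟨⟨by omega, h2⟩, h3⟩, h4⟩
  have hGbad : G.card + bad.card = NB.card := by
    rw [hGNB, hbad]
    exact Finset.card_filter_add_card_filter_not _
  have hHPsplit : HPhi.card + HPlo.card = HighP.card :=
    Finset.card_filter_add_card_filter_not _
  have hdisj1 : Disjoint HPhi LPx := by
    rw [Finset.disjoint_left]
    intro sp h1 h2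
    simp only [hHPhi, hHighP, hLPx, mem_filter, mem_univ, true_and] at h1 h2
    exact h2.1 h1.1
  have hBLbound : HPhi.card + LPx.card ≤ BL.card := by
    rw [← Finset.card_union_of_disjoint hdisj1,
      ← Finset.card_image_of_injOn ((val_inj k hdisj).injOn (s := ↑(HPhi ∪ LPx)))]
    apply Finset.card_le_card
    intro v hv
    simp only [mem_image, mem_union, hHPhi, hHPlo, hHighP, hLPx, mem_filter, mem_univ,
      true_and] at hv
    obtain ⟨sp, hsp, rfl⟩ := hv
    have hle : k sp.1 sp.2 ≤ k sp.1 (Fin.last N) := (hmono sp.1).monotone (Fin.le_last _)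
    have hm := hM sp.1
    simp only [hBL, mem_inter, mem_Icc, hB, crpB, mem_image, mem_univ, true_and]
    rcases hsp with ⟨h1, h2⟩ | ⟨h1, h2, h3⟩
    · exact ⟨⟨h2, by omega⟩, ⟨sp, rfl⟩⟩
    · exact ⟨⟨h2, h3⟩, ⟨sp, rfl⟩⟩
  have hmain : HPlo.card ≤ bad.card + LPx.card := by
    by_cases hGne : ∃ i0 ∈ G, i0 ≤ x + RN
    · obtain ⟨i0', hi0'G, hi0'le⟩ := hGne
      have hGn : G.Nonempty := ⟨i0', hi0'G⟩
      set i0 := G.min' hGn with hi0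
      have hi0G : i0 ∈ G := G.min'_mem hGn
      have hi0le : i0 ≤ x + RN := le_trans (G.min'_le _ hi0'G) hi0'le
      have hi0prop : (1 ≤ i0 ∧ i0 ≤ M) ∧ i0 ∉ B ∧ x + crpc k i0 ≤ i0 := by
        have := hi0G
        simp only [hG, mem_filter, mem_sdiff, mem_Icc] at this
        exact ⟨this.1.1, this.1.2, this.2⟩
      obtain ⟨⟨hi01, hi0M⟩, hi0B, hi0c⟩ := hi0prop
      set cP0 := univ.filter (fun sp : Fin r × Fin (N + 1) =>
        k sp.1 sp.2 < i0 ∧ i0 ≤ k sp.1 (Fin.last N)) with hcP0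
      set A1 := cP0.filter (fun sp => k sp.1 sp.2 < x) with hA1
      set A2 := cP0.filter (fun sp => ¬ k sp.1 sp.2 < x) with hA2
      have hA12 : A1.card + A2.card = crpc k i0 :=
        Finset.card_filter_add_card_filter_not _
      set DP := univ.filter (fun sp : Fin r × Fin (N + 1) =>
        x ≤ k sp.1 sp.2 ∧ k sp.1 sp.2 < i0 ∧ ¬ i0 ≤ k sp.1 (Fin.last N)) with hDP
      have hHPloA1 : HPlo.card ≤ A1.card := by
        apply Finset.card_le_card
        intro sp hsp
        simp only [hHPlo, hHighP, hA1, hcP0, mem_filter, mem_univ, true_and, not_le] at hsp ⊢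
        refine ⟨⟨by omega, by omega⟩, by omega⟩
      have hDPLPx : DP.card ≤ LPx.card := by
        apply Finset.card_le_card
        intro sp hsp
        have hle : k sp.1 sp.2 ≤ k sp.1 (Fin.last N) := (hmono sp.1).monotone (Fin.le_last _)
        simp only [hDP, hLPx, mem_filter, mem_univ, true_and, not_le] at hsp ⊢
        have hm := hM sp.1
        refine ⟨by omega, hsp.1, by omega⟩
      have hIco : ((Ico x i0) \ B).card + ((Ico x i0) ∩ B).card = i0 - x := by
        rw [Finset.card_sdiff_add_card_inter, Nat.card_Ico]
      have hNBIbad : ((Ico x i0) \ B).card ≤ bad.card := by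
        apply Finset.card_le_card
        intro i hi
        simp only [mem_sdiff, mem_Ico] at hi
        have hiG : i ∉ G := by
          intro hiG'
          have := G.min'_le i hiG'
          omega
        simp only [hbad, hNB, mem_filter, mem_sdiff, mem_Icc, not_le]
        constructor
        · exact ⟨⟨hi.1.1, by omega⟩, hi.2⟩
        · by_contra hcon
          apply hiG
          simp only [hG, mem_filter, mem_sdiff, mem_Icc]
          exact ⟨⟨⟨by omega, by omega⟩, hi.2⟩, by omega⟩
      have hBIA2DP : ((Ico x i0) ∩ B).card ≤ A2.card + DP.card := by
        have hsub : (Ico x i0) ∩ B ⊆ (A2 ∪ DP).image (fun sp => k sp.1 sp.2) := by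
          intro v hv
          simp only [mem_inter, mem_Ico, hB, crpB, mem_image, mem_univ, true_and] at hv
          obtain ⟨⟨hv1, hv2⟩, sp, rfl⟩ := hv
          simp only [mem_image, mem_union, hA2, hcP0, hDP, mem_filter, mem_univ, true_and]
          by_cases hal : i0 ≤ k sp.1 (Fin.last N)
          · exact ⟨sp, Or.inl ⟨⟨hv2, hal⟩, by omega⟩, rfl⟩
          · exact ⟨sp, Or.inr ⟨hv1, hv2, hal⟩, rfl⟩
        calc ((Ico x i0) ∩ B).card ≤ ((A2 ∪ DP).image (fun sp => k sp.1 sp.2)).card :=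
              Finset.card_le_card hsub
          _ ≤ (A2 ∪ DP).card := Finset.card_image_le
          _ ≤ A2.card + DP.card := Finset.card_union_le _ _
      omega
    · push_neg at hGne
      rcases Finset.eq_empty_or_nonempty HPlo with hHPe | hHPne
      · simp [hHPe]
      obtain ⟨sp0, hsp0⟩ := hHPne
      have hsp0' : x + RN ≤ k sp0.1 (Fin.last N) := by
        have := hsp0
        simp only [hHPlo, hHighP, mem_filter, mem_univ, true_and] at this
        exact this.1
      have hwin : x + RN ≤ M := le_trans hsp0' (hM sp0.1)
      set W0 := Ico x (x + RN) with hW0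
      set WH := univ.filter (fun sp : Fin r × Fin (N + 1) =>
        x ≤ k sp.1 sp.2 ∧ k sp.1 sp.2 < x + RN ∧ x + RN ≤ k sp.1 (Fin.last N)) with hWH
      set WL := univ.filter (fun sp : Fin r × Fin (N + 1) =>
        x ≤ k sp.1 sp.2 ∧ k sp.1 sp.2 < x + RN ∧ ¬ x + RN ≤ k sp.1 (Fin.last N)) with hWL
      have hW0card : (W0 \ B).card + (W0 ∩ B).card = RN := by
        rw [Finset.card_sdiff_add_card_inter, Nat.card_Ico]
        omega
      have hNBWbad : (W0 \ B).card ≤ bad.card := by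
        apply Finset.card_le_card
        intro i hi
        simp only [hW0, mem_sdiff, mem_Ico] at hi
        have hiG : i ∉ G := fun hiG' => by have := hGne i hiG'; omega
        simp only [hbad, hNB, mem_filter, mem_sdiff, mem_Icc, not_le]
        refine ⟨⟨⟨hi.1.1, by omega⟩, hi.2⟩, ?_⟩
        by_contra hcon
        apply hiG
        simp only [hG, mem_filter, mem_sdiff, mem_Icc]
        exact ⟨⟨⟨by omega, by omega⟩, hi.2⟩, by omega⟩
      have hBWle : (W0 ∩ B).card ≤ WH.card + WL.card := by
        have hsub : W0 ∩ B ⊆ (WH ∪ WL).image (fun sp => k sp.1 sp.2) := by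
          intro v hv
          simp only [hW0, mem_inter, mem_Ico, hB, crpB, mem_image, mem_univ, true_and] at hv
          obtain ⟨⟨hv1, hv2⟩, sp, rfl⟩ := hv
          simp only [mem_image, mem_union, hWH, hWL, mem_filter, mem_univ, true_and]
          by_cases hh : x + RN ≤ k sp.1 (Fin.last N)
          · exact ⟨sp, Or.inl ⟨hv1, hv2, hh⟩, rfl⟩
          · exact ⟨sp, Or.inr ⟨hv1, hv2, hh⟩, rfl⟩
        calc (W0 ∩ B).card ≤ ((WH ∪ WL).image (fun sp => k sp.1 sp.2)).card :=
              Finset.card_le_card hsub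
          _ ≤ (WH ∪ WL).card := Finset.card_image_le
          _ ≤ WH.card + WL.card := Finset.card_union_le _ _
      have hWLLPx : WL.card ≤ LPx.card := by
        apply Finset.card_le_card
        intro sp hsp
        simp only [hWL, hLPx, mem_filter, mem_univ, true_and] at hsp ⊢
        exact ⟨hsp.2.2, hsp.1, by omega⟩
      set Highs := univ.filter (fun s : Fin r => x + RN ≤ k s (Fin.last N)) with hHighs
      have hdisj2 : Disjoint HPlo WH := by
        rw [Finset.disjoint_left]
        intro sp h1 h2
        simp only [hHPlo, hHighP, hWH, mem_filter, mem_univ, true_and, not_le] at h1 h2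
        omega
      have hcross : HPlo.card + WH.card ≤ Highs.card * N := by
        rw [← Finset.card_union_of_disjoint hdisj2]
        have hsub : HPlo ∪ WH ⊆ Highs ×ˢ (univ.erase (Fin.last N)) := by
          intro sp hsp
          simp only [mem_union, hHPlo, hHPhi, hHighP, hWH, mem_filter, mem_univ, true_and,
            not_le] at hsp
          have hlt : k sp.1 sp.2 < k sp.1 (Fin.last N) ∧ x + RN ≤ k sp.1 (Fin.last N) := by
            rcases hsp with ⟨h1, h2⟩ | ⟨h1, h2, h3⟩
            · exact ⟨by omega, h1⟩
            · exact ⟨by omega, h3⟩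
          have hne : sp.2 ≠ Fin.last N := by
            intro hcon
            rw [hcon] at hlt
            omega
          simp only [Finset.mem_product, hHighs, mem_filter, mem_univ, true_and,
            Finset.mem_erase]
          exact ⟨hlt.2, hne, trivial⟩
        calc (HPlo ∪ WH).card ≤ (Highs ×ˢ (univ.erase (Fin.last N))).card :=
              Finset.card_le_card hsub
          _ = Highs.card * N := by
              rw [Finset.card_product, Finset.card_erase_of_mem (mem_univ _), Finset.card_univ]
              simp
      have hHighsr : Highs.card ≤ r := le_trans (Finset.card_le_univ _) (by simp)
      have h3 : Highs.card * N + N ≤ RN := by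
        calc Highs.card * N + N ≤ r * N + N :=
              Nat.add_le_add_right (Nat.mul_le_mul_right _ hHighsr) N
          _ = (r + 1) * N := by ring
          _ = RN := hRN.symm
      have h4 := le_trans (Nat.add_le_add_right hcross N) h3
      omega
  omega

lemma crpS_eq_U (k : Fin r → Fin (N + 1) → ℕ) (s : Fin r) (p : Fin (N + 1)) :
    crpS k (k s p) = crpU k (k s p) := by
  apply Set.inter_eq_left.mpr
  intro v _ h
  exact absurd rfl (h s p)

lemma crpU_zero (k : Fin r → Fin (N + 1) → ℕ)
    (hdisj : ∀ s p s' p', k s p = k s' p' → s = s' ∧ p = p') (s : Fin r) :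
    crpU k (k s 0) = {k s 0} := by
  ext v
  simp only [crpU, Set.mem_setOf_eq, Set.mem_singleton_iff]
  constructor
  · intro h
    exact h.1 s rfl
  · intro hv
    refine ⟨fun s' h => hv, fun s' p' hp' h => ?_⟩
    obtain ⟨h1, h2⟩ := hdisj s' p' s 0 h
    exact absurd h2 hp'

lemma crpU_pos (k : Fin r → Fin (N + 1) → ℕ)
    (hdisj : ∀ s p s' p', k s p = k s' p' → s = s' ∧ p = p') (s : Fin r) (p : Fin (N + 1))
    (hp : p ≠ 0) :
    crpU k (k s p) = ↑((Finset.Iio p).image (k s)) := by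
  ext v
  simp only [crpU, Set.mem_setOf_eq, coe_image, Set.mem_image, coe_Iio, Set.mem_Iio]
  constructor
  · intro h
    obtain ⟨q, hq, hv⟩ := h.2 s p hp rfl
    exact ⟨q, hq, hv.symm⟩
  · rintro ⟨q, hq, rfl⟩
    constructor
    · intro s' h
      obtain ⟨h1, h2⟩ := hdisj s' 0 s p h
      exact absurd h2.symm hp
    · intro s' p' hp' h
      obtain ⟨h1, h2⟩ := hdisj s' p' s p h
      subst h1; subst h2
      exact ⟨q, hq, rfl⟩

lemma crpS_notmem (k : Fin r → Fin (N + 1) → ℕ) (i : ℕ) (hi : ∀ s p, k s p ≠ i) :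
    crpS k i = (↑((univ.filter (fun sp : Fin r × Fin (N + 1) =>
      k sp.1 sp.2 < i ∧ i ≤ k sp.1 (Fin.last N))).image
        (fun sp => k sp.1 sp.2)) : Set ℕ)ᶜ := by
  ext v
  simp only [crpS, crpU, Set.mem_inter_iff, Set.mem_setOf_eq, Set.mem_compl_iff, coe_image,
    Set.mem_image, mem_coe, mem_filter, mem_univ, true_and]
  constructor
  · rintro ⟨-, h2⟩ ⟨sp, ⟨hlt, hle⟩, hv⟩
    exact h2 hi sp.1 sp.2 hlt hle hv.symm
  · intro h
    refine ⟨⟨fun s hs => absurd hs (hi s 0), fun s p hp hs => absurd hs (hi s p)⟩,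
      fun _ s q hlt hle hv => h ⟨(s, q), ⟨hlt, hle⟩, hv.symm⟩⟩

lemma event_eq_inter {Ω : Type*} (I : ℕ → Ω → ℕ) (k : Fin r → Fin (N + 1) → ℕ)
    (hdisj : ∀ s p s' p', k s p = k s' p' → s = s' ∧ p = p')
    (hpos : ∀ s, 1 ≤ k s 0) (hmono : ∀ s, StrictMono (k s))
    (M : ℕ) (hM : ∀ s, k s (Fin.last N) ≤ M) :
    (⋂ s, crpBlockEvent I (k s)) = ⋂ i ∈ (Icc 1 M : Finset ℕ), I i ⁻¹' crpS k i := by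
  have hkM : ∀ s (p : Fin (N + 1)), k s p ∈ Icc 1 M := by
    intro s p
    simp only [mem_Icc]
    exact ⟨le_trans (hpos s) ((hmono s).monotone (Fin.zero_le _)),
      le_trans ((hmono s).monotone (Fin.le_last _)) (hM s)⟩
  apply subset_antisymm
  · intro ω hω
    simp only [Set.mem_iInter] at hω
    simp only [Set.mem_iInter, Set.mem_preimage]
    intro i _
    constructor
    · constructor
      · intro s hs
        have := (hω s).1
        rw [hs] at this
        exact this
      · intro s p hp hs
        obtain ⟨q, hq, hval⟩ := (hω s).2.1 p hp
        rw [hs] at hval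
        exact ⟨q, hq, hval⟩
    · intro hnb s q hlt hle
      have h0 : k s 0 < i := lt_of_le_of_lt ((hmono s).monotone (Fin.zero_le q)) hlt
      exact (hω s).2.2 i h0 hle (fun p => hnb s p) q hlt
  · intro ω hω
    simp only [Set.mem_iInter, Set.mem_preimage] at hω
    simp only [Set.mem_iInter]
    intro s
    refine ⟨?_, ?_, ?_⟩
    · exact (hω (k s 0) (hkM s 0)).1.1 s rfl
    · intro p hp
      obtain ⟨q, hq, hval⟩ := (hω (k s p) (hkM s p)).1.2 s p hp rfl
      exact ⟨q, hq, hval⟩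
    · intro i h0 hle hnb q hqlt
      have hiIcc : i ∈ (Icc 1 M : Finset ℕ) := by
        simp only [mem_Icc]
        exact ⟨le_trans (hpos s) (le_of_lt h0), le_trans hle (hM s)⟩
      have hSi := hω i hiIcc
      by_cases hiB : ∃ s' p', k s' p' = i
      · obtain ⟨s', p', hsp'⟩ := hiB
        by_cases hp0 : p' = 0
        · subst hp0
          have hval := hSi.1.1 s' hsp'
          rw [hval]
          omega
        · obtain ⟨q', hq', hval⟩ := hSi.1.2 s' p' hp0 hsp'
          rw [hval]
          intro hcon
          obtain ⟨hs1, hs2⟩ := hdisj s' q' s q hcon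
          subst hs1
          exact hnb p' hsp'
      · push_neg at hiB
        exact hSi.2 hiB s q hqlt hle

lemma ms_prod_le (θ : ℝ) (hθ : 0 < θ) :
    ∀ (n : ℕ) (V : Multiset ℕ), V.card = n → (∀ v ∈ V, 1 ≤ v) →
      (∀ x, (V.filter (fun v => v ≤ x)).card ≤ x) →
      ∏ i ∈ Finset.range n, (θ + i) ≤ (V.map (fun v : ℕ => θ + (v : ℝ) - 1)).prod := by
  intro n
  induction n with
  | zero =>
    intro V hc _ _
    rw [Multiset.card_eq_zero] at hc
    simp [hc]
  | succ n ih =>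
    intro V hc h1 hx
    have hex : ∃ v ∈ V, n + 1 ≤ v := by
      by_contra h
      push_neg at h
      have : V.filter (fun v => v ≤ n) = V := by
        rw [Multiset.filter_eq_self]
        intro v hv; exact Nat.lt_succ_iff.mp (h v hv)
      have h2 := hx n
      rw [this, hc] at h2
      omega
    obtain ⟨v, hv, hvn⟩ := hex
    have hVe : V = v ::ₘ V.erase v := (Multiset.cons_erase hv).symm
    have hcard' : (V.erase v).card = n := by
      rw [Multiset.card_erase_of_mem hv, hc]; rfl
    have h1' : ∀ w ∈ V.erase v, 1 ≤ w := fun w hw => h1 w (Multiset.mem_of_mem_erase hw)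
    have hx' : ∀ x, ((V.erase v).filter (fun w => w ≤ x)).card ≤ x := by
      intro x
      refine le_trans (Multiset.card_le_card
        (Multiset.filter_le_filter _ (Multiset.erase_le v V))) (hx x)
    have IH := ih (V.erase v) hcard' h1' hx'
    have hpos : (0:ℝ) < ∏ i ∈ Finset.range n, (θ + i) := by
      apply Finset.prod_pos; intro i _; positivity
    rw [hVe, Multiset.map_cons, Multiset.prod_cons, Finset.prod_range_succ]
    rw [mul_comm]
    apply mul_le_mul
    · have : (n:ℝ) + 1 ≤ (v:ℝ) := by exact_mod_cast hvn
      linarith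
    · exact IH
    · exact le_of_lt hpos
    · have : (n:ℝ) + 1 ≤ (v:ℝ) := by exact_mod_cast hvn
      linarith

lemma ms_prod_ge (θ : ℝ) :
    ∀ (n : ℕ) (V : Multiset ℤ), V.card = n →
      (∀ v ∈ V, (0:ℝ) < θ + (v : ℝ) - 1) →
      (∀ v ∈ V, v ≤ (n : ℤ)) →
      (∀ x : ℕ, 1 ≤ x → x ≤ n → (V.filter (fun v => (x : ℤ) ≤ v)).card + x ≤ n + 1) →
      (V.map (fun v : ℤ => θ + (v : ℝ) - 1)).prod ≤ ∏ j ∈ Finset.range n, (θ + j) := by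
  intro n
  induction n with
  | zero =>
    intro V hc _ _ _
    rw [Multiset.card_eq_zero] at hc
    simp [hc]
  | succ n ih =>
    intro V hc hpos hub hcnt
    have hVne : V ≠ 0 := by
      intro h; rw [h] at hc; simp at hc
    obtain ⟨w, hw⟩ := Multiset.exists_mem_of_ne_zero hVne
    have htFne : V.toFinset.Nonempty := ⟨w, Multiset.mem_toFinset.mpr hw⟩
    set v0 := V.toFinset.max' htFne with hv0
    have hv0V : v0 ∈ V := Multiset.mem_toFinset.mp (V.toFinset.max'_mem htFne)
    have hv0max : ∀ v ∈ V, v ≤ v0 := fun v hv =>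
      V.toFinset.le_max' v (Multiset.mem_toFinset.mpr hv)
    set V' := V.erase v0 with hV'
    have hVe : V = v0 ::ₘ V' := (Multiset.cons_erase hv0V).symm
    have hcard' : V'.card = n := by
      rw [hV', Multiset.card_erase_of_mem hv0V, hc]; rfl
    have hpos' : ∀ v ∈ V', (0:ℝ) < θ + (v : ℝ) - 1 :=
      fun v hv => hpos v (Multiset.mem_of_mem_erase hv)
    have hub' : ∀ v ∈ V', v ≤ (n : ℤ) := by
      intro v hv
      by_contra hcon
      push_neg at hcon
      have hvV : v ∈ V := Multiset.mem_of_mem_erase hv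
      have h1 : v = (n : ℤ) + 1 := le_antisymm (by exact_mod_cast hub v hvV) (by omega)
      have hv0n : v0 = (n : ℤ) + 1 := le_antisymm (by exact_mod_cast hub v0 hv0V)
        (h1 ▸ hv0max v hvV)
      have hfil := hcnt (n + 1) (by omega) (le_refl _)
      have h2 : (2 : ℕ) ≤ (V.filter (fun v => ((n+1 : ℕ) : ℤ) ≤ v)).card := by
        rw [hVe, Multiset.filter_cons]
        have hx0 : ((n+1 : ℕ) : ℤ) ≤ v0 := by rw [hv0n]; push_cast; omega
        rw [if_pos hx0]
        have hmem : v ∈ V'.filter (fun v => ((n+1 : ℕ) : ℤ) ≤ v) := by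
          rw [Multiset.mem_filter]
          exact ⟨hv, by rw [h1]; push_cast; omega⟩
        have h3 : 1 ≤ (V'.filter (fun v => ((n+1 : ℕ) : ℤ) ≤ v)).card :=
          Multiset.card_pos.mpr (fun h0 => by
            rw [h0] at hmem; exact absurd hmem (Multiset.notMem_zero v))
        rw [Multiset.card_add, Multiset.card_singleton]
        omega
      omega
    have hcnt' : ∀ x : ℕ, 1 ≤ x → x ≤ n →
        (V'.filter (fun v => (x : ℤ) ≤ v)).card + x ≤ n + 1 := by
      intro x hx1 hxn
      by_cases hxv : (x : ℤ) ≤ v0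
      · have := hcnt x hx1 (by omega)
        rw [hVe, Multiset.filter_cons, if_pos hxv, Multiset.card_add,
          Multiset.card_singleton] at this
        omega
      · have hzero : V'.filter (fun v => (x : ℤ) ≤ v) = 0 := by
          rw [Multiset.filter_eq_nil]
          intro v hv
          have := hv0max v (Multiset.mem_of_mem_erase hv)
          omega
        rw [hzero]
        simp only [Multiset.card_zero, zero_add]
        omega
    have IH := ih V' hcard' hpos' hub' hcnt'
    rw [hVe, Multiset.map_cons, Multiset.prod_cons, Finset.prod_range_succ]
    rw [mul_comm (∏ j ∈ Finset.range n, (θ + j)) _]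
    apply mul_le_mul
    · have : (v0 : ℝ) ≤ (n : ℝ) + 1 := by exact_mod_cast hub v0 hv0V
      linarith
    · exact IH
    · apply Multiset.prod_nonneg
      intro a ha
      obtain ⟨v, hv, rfl⟩ := Multiset.mem_map.mp ha
      exact le_of_lt (hpos' v hv)
    · have h0 := hpos v0 hv0V
      have h5 : (v0 : ℝ) ≤ (n : ℝ) + 1 := by exact_mod_cast hub v0 hv0V
      linarith

lemma prod_fin_ite_factorial (θ : ℝ) (N : ℕ) :
    (∏ p : Fin (N + 1), (if p = 0 then θ else ((p : ℕ) : ℝ))) = θ * N.factorial := by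
  rw [Fin.prod_univ_succ]
  simp only [if_pos rfl]
  congr 1
  have h1 : ∀ j : Fin N, (if j.succ = 0 then θ else ((j.succ : ℕ) : ℝ)) = ((j : ℕ) : ℝ) + 1 := by
    intro j
    rw [if_neg (Fin.succ_ne_zero j), Fin.val_succ]
    push_cast; ring
  rw [Finset.prod_congr rfl (fun j _ => h1 j),
    Fin.prod_univ_eq_prod_range (fun j => ((j : ℕ) : ℝ) + 1)]
  rw [show (fun j : ℕ => ((j : ℕ) : ℝ) + 1) = (fun j : ℕ => (((j + 1 : ℕ) : ℕ) : ℝ)) by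
    funext j; push_cast; ring]
  rw [← Nat.cast_prod]
  rw [Finset.prod_range_add_one_eq_factorial]

section Prob

variable {Ω : Type*} [MeasurableSpace Ω] (P : Measure Ω) [IsProbabilityMeasure P]
  (θ : ℝ) (I : ℕ → Ω → ℕ)

omit [IsProbabilityMeasure P] in
lemma prob_mem_finset (hmeas : ∀ n, Measurable (I n))
    (hjoin : ∀ n k : ℕ, 1 ≤ k → k < n → P {ω | I n ω = k} = ENNReal.ofReal (1 / (θ + n - 1)))
    (i : ℕ) (F : Finset ℕ) (hF : ∀ v ∈ F, 1 ≤ v ∧ v < i) :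
    P (I i ⁻¹' ↑F) = ENNReal.ofReal (F.card / (θ + i - 1)) := by
  have hun : (I i ⁻¹' ↑F) = ⋃ v ∈ F, I i ⁻¹' {v} := by
    ext ω; simp
  rw [hun, measure_biUnion_finset]
  · have hterm : ∀ v ∈ F, P (I i ⁻¹' {v}) = ENNReal.ofReal (1 / (θ + i - 1)) := by
      intro v hv
      have hp : I i ⁻¹' {v} = {ω | I i ω = v} := by ext ω; simp [Set.mem_preimage]
      rw [hp, hjoin i v (hF v hv).1 (hF v hv).2]
    rw [Finset.sum_congr rfl hterm, Finset.sum_const, nsmul_eq_mul]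
    rw [← ENNReal.ofReal_natCast F.card, ← ENNReal.ofReal_mul (by positivity)]
    congr 1
    rw [mul_one_div]
  · intro u hu v hv huv
    simp only [Function.onFun]
    apply Set.disjoint_left.mpr
    intro ω h1 h2
    simp only [Set.mem_preimage, Set.mem_singleton_iff] at h1 h2
    exact huv (h1 ▸ h2 ▸ rfl)
  · exact fun v _ => (hmeas i) (MeasurableSet.singleton v)

omit [IsProbabilityMeasure P] in
lemma prob_S_block (hθ : 0 < θ) (hmeas : ∀ n, Measurable (I n))
    (hnew : ∀ n : ℕ, 1 ≤ n → P {ω | I n ω = n} = ENNReal.ofReal (θ / (θ + n - 1)))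
    (hjoin : ∀ n k : ℕ, 1 ≤ k → k < n → P {ω | I n ω = k} = ENNReal.ofReal (1 / (θ + n - 1)))
    (k : Fin r → Fin (N + 1) → ℕ)
    (hdisj : ∀ s p s' p', k s p = k s' p' → s = s' ∧ p = p')
    (hpos : ∀ s, 1 ≤ k s 0) (hmono : ∀ s, StrictMono (k s)) (s : Fin r) (p : Fin (N + 1)) :
    P (I (k s p) ⁻¹' crpS k (k s p)) =
      ENNReal.ofReal ((if p = 0 then θ else ((p : ℕ) : ℝ)) / (θ + (k s p : ℝ) - 1)) := by
  rw [crpS_eq_U k s p]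
  by_cases hp : p = 0
  · subst hp
    rw [crpU_zero k hdisj s]
    have hpre : I (k s 0) ⁻¹' {k s 0} = {ω | I (k s 0) ω = k s 0} := by
      ext ω; simp [Set.mem_preimage]
    rw [hpre, hnew (k s 0) (hpos s), if_pos rfl]
  · rw [crpU_pos k hdisj s p hp, if_neg hp]
    rw [prob_mem_finset P θ I hmeas hjoin (k s p) _ ?_]
    · congr 2
      rw [Finset.card_image_of_injOn ((hmono s).injective.injOn), Fin.card_Iio]
    · intro v hv
      simp only [Finset.mem_image, Finset.mem_Iio] at hv
      obtain ⟨q, hq, rfl⟩ := hv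
      exact ⟨kval_one_le k hpos hmono s q, hmono s hq⟩

lemma prob_S_nonblock (hθ : 0 < θ) (hmeas : ∀ n, Measurable (I n))
    (hjoin : ∀ n k : ℕ, 1 ≤ k → k < n → P {ω | I n ω = k} = ENNReal.ofReal (1 / (θ + n - 1)))
    (k : Fin r → Fin (N + 1) → ℕ)
    (hdisj : ∀ s p s' p', k s p = k s' p' → s = s' ∧ p = p')
    (hpos : ∀ s, 1 ≤ k s 0) (hmono : ∀ s, StrictMono (k s)) (i : ℕ) (hi : i ∉ crpB k)
    (hi1 : 1 ≤ i) :
    P (I i ⁻¹' crpS k i) =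
      ENNReal.ofReal ((θ + (i : ℝ) - 1 - crpc k i) / (θ + (i : ℝ) - 1)) := by
  have hi' : ∀ s p, k s p ≠ i := by
    intro s p hcon
    exact hi (Finset.mem_image.mpr ⟨(s, p), Finset.mem_univ _, hcon⟩)
  rw [crpS_notmem k i hi', Set.preimage_compl]
  set Fs := (univ.filter (fun sp : Fin r × Fin (N + 1) =>
    k sp.1 sp.2 < i ∧ i ≤ k sp.1 (Fin.last N))).image
      (fun sp => k sp.1 sp.2) with hFs
  have hFscard : Fs.card = crpc k i :=
    Finset.card_image_of_injOn ((val_inj k hdisj).injOn)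
  have hFsval : P (I i ⁻¹' ↑Fs) = ENNReal.ofReal ((crpc k i : ℝ) / (θ + (i : ℝ) - 1)) := by
    rw [prob_mem_finset P θ I hmeas hjoin i Fs ?_, hFscard]
    intro v hv
    simp only [hFs, Finset.mem_image, Finset.mem_filter, Finset.mem_univ, true_and] at hv
    obtain ⟨sp, hsp, rfl⟩ := hv
    exact ⟨kval_one_le k hpos hmono _ _, hsp.1⟩
  have hcompl := measure_compl (μ := P) ((hmeas i) (Fs.measurableSet)) (measure_ne_top _ _)
  rw [hcompl, measure_univ, hFsval]
  have hd : (0 : ℝ) < θ + (i : ℝ) - 1 := by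
    have : (1 : ℝ) ≤ (i : ℝ) := by exact_mod_cast hi1
    linarith
  have hcle : (crpc k i : ℝ) ≤ (i : ℝ) - 1 ∨ crpc k i = 0 := by
    rcases crpc_le k hdisj hpos hmono i with h | h
    · left
      have : (crpc k i : ℝ) + 1 ≤ (i : ℝ) := by exact_mod_cast h
      linarith
    · right; exact h
  have hnum : (0 : ℝ) ≤ (θ + (i : ℝ) - 1 - crpc k i) := by
    rcases hcle with h | h
    · linarith
    · rw [h]; push_cast; linarith
  have hsum : ENNReal.ofReal ((θ + (i : ℝ) - 1 - crpc k i) / (θ + (i : ℝ) - 1)) +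
      ENNReal.ofReal ((crpc k i : ℝ) / (θ + (i : ℝ) - 1)) = 1 := by
    rw [← ENNReal.ofReal_add (by positivity) (by positivity)]
    rw [← add_div, sub_add_cancel, div_self hd.ne', ENNReal.ofReal_one]
  rw [← hsum, ENNReal.add_sub_cancel_right ENNReal.ofReal_ne_top]

end Prob
end CRPAux

theorem crp_joint_block_probability_bounds
    {Ω : Type*} [MeasurableSpace Ω] (P : Measure Ω) [IsProbabilityMeasure P]
    (θ : ℝ) (hθ : 0 < θ) (I : ℕ → Ω → ℕ) (hmeas : ∀ n, Measurable (I n))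
    (hindep : iIndepFun I P)
    (hnew : ∀ n : ℕ, 1 ≤ n → P {ω | I n ω = n} = ENNReal.ofReal (θ / (θ + n - 1)))
    (hjoin : ∀ n k : ℕ, 1 ≤ k → k < n →
      P {ω | I n ω = k} = ENNReal.ofReal (1 / (θ + n - 1)))
    (r N : ℕ) (hr : 1 ≤ r) (hN : 1 ≤ N) (k : Fin r → Fin (N + 1) → ℕ)
    (hmono : ∀ s, StrictMono (k s)) (hpos : ∀ s, 1 ≤ k s 0)
    (hdisj : ∀ s p s' p', k s p = k s' p' → s = s' ∧ p = p')
    (hbig : ∀ s, 0 < θ + (k s (Fin.last N) : ℝ) - ((r : ℝ) + 1) * N - 1) :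
    ENNReal.ofReal (θ ^ r * ∏ s : Fin r,
        (N.factorial : ℝ) / (θ + (k s (Fin.last N) : ℝ)) ^ (N + 1)) ≤
      P (⋂ s : Fin r, crpBlockEvent I (k s)) ∧
    P (⋂ s : Fin r, crpBlockEvent I (k s)) ≤
      ENNReal.ofReal (θ ^ r * ∏ s : Fin r,
        (N.factorial : ℝ) /
          (θ + (k s (Fin.last N) : ℝ) - ((r : ℝ) + 1) * N - 1) ^ (N + 1)) := by
  classical
  set M : ℕ := univ.sup (fun s => k s (Fin.last N)) with hMdef
  have hmM : ∀ s, k s (Fin.last N) ≤ M := fun s =>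
    le_of_le_of_eq (Finset.le_sup (f := fun s => k s (Fin.last N)) (Finset.mem_univ s)) hMdef.symm
  have hkval1 : ∀ s p, 1 ≤ k s p := kval_one_le k hpos hmono
  have hkIcc : ∀ (sp : Fin r × Fin (N + 1)), k sp.1 sp.2 ∈ Icc 1 M := by
    intro sp
    simp only [mem_Icc]
    exact ⟨hkval1 _ _, le_trans ((hmono sp.1).monotone (Fin.le_last _)) (hmM sp.1)⟩
  have hBsub : crpB k ⊆ Icc 1 M := by
    intro v hv
    simp only [crpB, mem_image, mem_univ, true_and] at hv
    obtain ⟨sp, rfl⟩ := hv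
    exact hkIcc sp
  set D := Icc 1 M \ crpB k with hD
  have hDmem : ∀ i ∈ D, (1 ≤ i ∧ i ≤ M) ∧ i ∉ crpB k := by
    intro i hi
    simpa only [hD, mem_sdiff, mem_Icc] using hi
  have hcile : ∀ i ∈ D, crpc k i ≤ i - 1 := by
    intro i hi
    rcases crpc_le k hdisj hpos hmono i with h | h
    · omega
    · have := (hDmem i hi).1.1
      omega
  -- event rewritten as an intersection of independent coordinate events
  rw [event_eq_inter I k hdisj hpos hmono M hmM]
  have hPeq : P (⋂ i ∈ (Icc 1 M : Finset ℕ), I i ⁻¹' crpS k i)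
      = ∏ i ∈ Icc 1 M, P (I i ⁻¹' crpS k i) :=
    hindep.meas_biInter (fun i _ => ⟨crpS k i, trivial, rfl⟩)
  rw [hPeq, ← Finset.prod_sdiff hBsub, ← hD]
  have himg : ∏ i ∈ crpB k, P (I i ⁻¹' crpS k i)
      = ∏ sp : Fin r × Fin (N + 1), P (I (k sp.1 sp.2) ⁻¹' crpS k (k sp.1 sp.2)) := by
    rw [crpB, Finset.prod_image]
    intro a _ b _ hab
    exact val_inj k hdisj hab
  rw [himg]
  set gfun : ℕ → ℝ := fun i => (θ + (i : ℝ) - 1 - crpc k i) / (θ + (i : ℝ) - 1) with hgfun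
  set wfun : Fin r × Fin (N + 1) → ℝ := fun sp =>
    (if sp.2 = 0 then θ else ((sp.2 : ℕ) : ℝ)) / (θ + (k sp.1 sp.2 : ℝ) - 1) with hwfun
  have hval1 : ∀ i ∈ D, P (I i ⁻¹' crpS k i) = ENNReal.ofReal (gfun i) := by
    intro i hi
    exact prob_S_nonblock P θ I hθ hmeas hjoin k hdisj hpos hmono i
      (hDmem i hi).2 (hDmem i hi).1.1
  have hval2 : ∀ sp : Fin r × Fin (N + 1),
      P (I (k sp.1 sp.2) ⁻¹' crpS k (k sp.1 sp.2)) = ENNReal.ofReal (wfun sp) :=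
    fun sp => prob_S_block P θ I hθ hmeas hnew hjoin k hdisj hpos hmono sp.1 sp.2
  rw [Finset.prod_congr rfl hval1, Finset.prod_congr rfl (fun sp _ => hval2 sp)]
  -- positivity of denominators etc.
  have hdpos : ∀ i : ℕ, 1 ≤ i → (0 : ℝ) < θ + (i : ℝ) - 1 := by
    intro i hi
    have : (1 : ℝ) ≤ (i : ℝ) := by exact_mod_cast hi
    linarith
  have hgpos : ∀ i ∈ D, 0 < gfun i := by
    intro i hi
    have h1 := (hDmem i hi).1.1
    have h2 := hcile i hi
    have h3 : (crpc k i : ℝ) ≤ (i : ℝ) - 1 := by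
      have : crpc k i + 1 ≤ i := by omega
      have := (Nat.cast_le (α := ℝ)).mpr this
      push_cast at this
      linarith
    have := hdpos i h1
    apply div_pos (by linarith) this
  have hwpos : ∀ sp : Fin r × Fin (N + 1), 0 < wfun sp := by
    intro sp
    apply div_pos
    · by_cases hsp : sp.2 = 0
      · rw [if_pos hsp]; exact hθ
      · rw [if_neg hsp]
        have : 0 < (sp.2 : ℕ) := Fin.pos_iff_ne_zero.mpr hsp
        exact_mod_cast this
    · exact hdpos _ (hkval1 _ _)
  rw [← ENNReal.ofReal_prod_of_nonneg (fun i hi => le_of_lt (hgpos i hi)),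
    ← ENNReal.ofReal_prod_of_nonneg (fun sp _ => le_of_lt (hwpos sp)),
    ← ENNReal.ofReal_mul (Finset.prod_nonneg (fun i hi => le_of_lt (hgpos i hi)))]
  -- real abbreviations
  set nD := ∏ i ∈ D, (θ + (i : ℝ) - 1 - crpc k i) with hnD
  set dD := ∏ i ∈ D, (θ + (i : ℝ) - 1) with hdD
  set dP := ∏ sp : Fin r × Fin (N + 1), (θ + (k sp.1 sp.2 : ℝ) - 1) with hdP
  have hgP : ∏ i ∈ D, gfun i = nD / dD := Finset.prod_div_distrib _ _
  have hwP : ∏ sp : Fin r × Fin (N + 1), wfun sp = (θ * N.factorial) ^ r / dP := by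
    rw [hwfun, Finset.prod_div_distrib]
    congr 1
    rw [Fintype.prod_prod_type]
    have : ∀ s : Fin r, (∏ p : Fin (N + 1), (if p = 0 then θ else ((p : ℕ) : ℝ)))
        = θ * N.factorial := fun s => prod_fin_ite_factorial θ N
    rw [Finset.prod_congr rfl (fun s _ => this s), Finset.prod_const, Finset.card_univ,
      Fintype.card_fin]
  have hnDpos : 0 < nD := by
    apply Finset.prod_pos
    intro i hi
    have h1 := (hDmem i hi).1.1
    have h2 := hcile i hi
    have h3 : (crpc k i : ℝ) ≤ (i : ℝ) - 1 := by
      have h4 : crpc k i + 1 ≤ i := by omega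
      have := (Nat.cast_le (α := ℝ)).mpr h4
      push_cast at this
      linarith
    have := hdpos i h1
    linarith
  have hdDpos : 0 < dD := Finset.prod_pos (fun i hi => hdpos i (hDmem i hi).1.1)
  have hdPpos : 0 < dP := Finset.prod_pos (fun sp _ => hdpos _ (hkval1 _ _))
  have hIccprod : ∏ i ∈ Icc 1 M, (θ + (i : ℝ) - 1) = dD * dP := by
    rw [← Finset.prod_sdiff hBsub, ← hD]
    congr 1
    rw [crpB, Finset.prod_image (fun a _ b _ hab => val_inj k hdisj hab)]
  have hrange : ∏ j ∈ Finset.range M, (θ + (j : ℝ)) = ∏ i ∈ Icc 1 M, (θ + (i : ℝ) - 1) := by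
    apply Finset.prod_nbij' (fun j => j + 1) (fun i => i - 1)
    · intro a ha
      simp only [Finset.mem_range] at ha
      simp only [mem_Icc]
      omega
    · intro a ha
      simp only [mem_Icc] at ha
      simp only [Finset.mem_range]
      omega
    · intro a _; omega
    · intro a ha
      simp only [mem_Icc] at ha
      omega
    · intro a ha
      have : ((a + 1 : ℕ) : ℝ) = (a : ℝ) + 1 := by push_cast; ring
      rw [this]
      ring
  have hIccpos : 0 < ∏ i ∈ Icc 1 M, (θ + (i : ℝ) - 1) := by
    rw [hIccprod]; exact mul_pos hdDpos hdPpos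
  have hcardB : (crpB k).card = r * (N + 1) := by
    rw [crpB, Finset.card_image_of_injective _ (val_inj k hdisj), Finset.card_univ]
    simp [Fintype.card_prod]
  have hDcard : D.card + r * (N + 1) = M := by
    have hle := Finset.card_le_card hBsub
    rw [hD, Finset.card_sdiff_of_subset hBsub, Nat.card_Icc, hcardB]
    rw [Nat.card_Icc, hcardB] at hle
    omega
  have hAr : (0:ℝ) < (θ * N.factorial) ^ r := by positivity
  rw [hgP, hwP]
  constructor
  · -- lower bound
    apply ENNReal.ofReal_le_ofReal
    set Xl := ∏ s : Fin r, (θ + (k s (Fin.last N) : ℝ)) ^ (N + 1) with hXl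
    have hXlpos : 0 < Xl := by
      apply Finset.prod_pos
      intro s _
      have : (0:ℝ) < θ + (k s (Fin.last N) : ℝ) := by positivity
      positivity
    have hLHS : θ ^ r * ∏ s : Fin r,
        (N.factorial : ℝ) / (θ + (k s (Fin.last N) : ℝ)) ^ (N + 1)
        = (θ * N.factorial) ^ r / Xl := by
      rw [Finset.prod_div_distrib, Finset.prod_const, Finset.card_univ, Fintype.card_fin,
        mul_pow, ← hXl]
      ring
    rw [hLHS]
    -- the key product inequality from the multiset lemma
    set Vlow : Multiset ℕ := D.val.map (fun i => i - crpc k i) +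
      (univ : Finset (Fin r × Fin (N + 1))).val.map (fun sp => k sp.1 (Fin.last N) + 1)
      with hVlow
    have hVcard : Multiset.card Vlow = M := by
      rw [hVlow, Multiset.card_add, Multiset.card_map, Multiset.card_map]
      have h1 : Multiset.card D.val = D.card := rfl
      have h2 : Multiset.card (univ : Finset (Fin r × Fin (N + 1))).val
          = r * (N + 1) := by
        rw [show Multiset.card (univ : Finset (Fin r × Fin (N + 1))).val
          = (univ : Finset (Fin r × Fin (N + 1))).card from rfl, Finset.card_univ]
        simp [Fintype.card_prod]
      rw [h1, h2]
      exact hDcard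
    have hVmem : ∀ v ∈ Vlow, 1 ≤ v := by
      intro v hv
      rw [hVlow, Multiset.mem_add] at hv
      rcases hv with hv | hv
      · obtain ⟨i, hi, rfl⟩ := Multiset.mem_map.mp hv
        have hiD : i ∈ D := hi
        have := hcile i hiD
        have := (hDmem i hiD).1.1
        omega
      · obtain ⟨sp, _, rfl⟩ := Multiset.mem_map.mp hv
        omega
    have hVcnt : ∀ x, (Vlow.filter (fun v => v ≤ x)).card ≤ x := by
      intro x
      rw [hVlow, Multiset.filter_add, Multiset.card_add]
      have h1 : (Multiset.filter (fun v => v ≤ x) (D.val.map (fun i => i - crpc k i))).card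
          = (D.filter (fun i => i - crpc k i ≤ x)).card := by
        rw [← Multiset.countP_eq_card_filter, Multiset.countP_map]
        rfl
      have h2 : (Multiset.filter (fun v => v ≤ x)
          ((univ : Finset (Fin r × Fin (N + 1))).val.map
            (fun sp => k sp.1 (Fin.last N) + 1))).card
          = ((univ : Finset (Fin r × Fin (N + 1))).filter
            (fun sp => k sp.1 (Fin.last N) + 1 ≤ x)).card := by
        rw [← Multiset.countP_eq_card_filter, Multiset.countP_map]
        rfl
      rw [h1, h2, hD]
      exact count_key k hdisj hpos hmono M x
    have hVprodeq : (Vlow.map (fun v : ℕ => θ + (v : ℝ) - 1)).prod = nD * Xl := by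
      rw [hVlow, Multiset.map_add, Multiset.prod_add, Multiset.map_map, Multiset.map_map]
      congr 1
      · rw [show (D.val.map ((fun v : ℕ => θ + (v : ℝ) - 1) ∘ (fun i => i - crpc k i))).prod
          = ∏ i ∈ D, (θ + ((i - crpc k i : ℕ) : ℝ) - 1) from
            (Finset.prod_eq_multiset_prod D _).symm]
        apply Finset.prod_congr rfl
        intro i hi
        have h2 := hcile i hi
        have h1 := (hDmem i hi).1.1
        have hsub : crpc k i ≤ i := by omega
        rw [Nat.cast_sub hsub]
        ring
      · rw [show ((univ : Finset (Fin r × Fin (N + 1))).val.map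
            ((fun v : ℕ => θ + (v : ℝ) - 1) ∘ (fun sp => k sp.1 (Fin.last N) + 1))).prod
          = ∏ sp : Fin r × Fin (N + 1), (θ + ((k sp.1 (Fin.last N) + 1 : ℕ) : ℝ) - 1) from
            (Finset.prod_eq_multiset_prod _ _).symm]
        rw [Fintype.prod_prod_type, hXl]
        apply Finset.prod_congr rfl
        intro s _
        have hc : ∀ p : Fin (N + 1), (θ + ((k (s, p).1 (Fin.last N) + 1 : ℕ) : ℝ) - 1)
            = θ + (k s (Fin.last N) : ℝ) := by
          intro p; push_cast; ring
        rw [Finset.prod_congr rfl (fun p _ => hc p), Finset.prod_const, Finset.card_univ,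
          Fintype.card_fin]
    have hkey : ∏ i ∈ Icc 1 M, (θ + (i : ℝ) - 1) ≤ nD * Xl := by
      rw [← hrange, ← hVprodeq]
      exact ms_prod_le θ hθ M Vlow hVcard hVmem hVcnt
    -- final algebra
    rw [div_mul_div_comm, div_le_div_iff₀ hXlpos (mul_pos hdDpos hdPpos)]
    calc (θ * ↑N.factorial) ^ r * (dD * dP)
        = (θ * ↑N.factorial) ^ r * ∏ i ∈ Icc 1 M, (θ + (i : ℝ) - 1) := by rw [hIccprod]
      _ ≤ (θ * ↑N.factorial) ^ r * (nD * Xl) :=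
          mul_le_mul_of_nonneg_left hkey (le_of_lt hAr)
      _ = nD * (θ * ↑N.factorial) ^ r * Xl := by ring
  · -- upper bound
    apply ENNReal.ofReal_le_ofReal
    set Xu := ∏ s : Fin r, (θ + (k s (Fin.last N) : ℝ) - ((r : ℝ) + 1) * N - 1) ^ (N + 1)
      with hXu
    have hXupos : 0 < Xu := by
      apply Finset.prod_pos
      intro s _
      exact pow_pos (hbig s) _
    have hRHS : θ ^ r * ∏ s : Fin r, (N.factorial : ℝ) /
        (θ + (k s (Fin.last N) : ℝ) - ((r : ℝ) + 1) * N - 1) ^ (N + 1)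
        = (θ * N.factorial) ^ r / Xu := by
      rw [Finset.prod_div_distrib, Finset.prod_const, Finset.card_univ, Fintype.card_fin,
        mul_pow, ← hXu]
      ring
    rw [hRHS]
    set Vup : Multiset ℤ := D.val.map (fun i : ℕ => (i : ℤ) - crpc k i) +
      (univ : Finset (Fin r × Fin (N + 1))).val.map
        (fun sp : Fin r × Fin (N + 1) => (k sp.1 (Fin.last N) : ℤ) - ((r : ℤ) + 1) * N) with hVup
    have hVupcard : Multiset.card Vup = M := by
      rw [hVup, Multiset.card_add, Multiset.card_map, Multiset.card_map]
      have h1 : Multiset.card D.val = D.card := rfl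
      have h2 : Multiset.card (univ : Finset (Fin r × Fin (N + 1))).val = r * (N + 1) := by
        rw [show Multiset.card (univ : Finset (Fin r × Fin (N + 1))).val
          = (univ : Finset (Fin r × Fin (N + 1))).card from rfl, Finset.card_univ]
        simp [Fintype.card_prod]
      rw [h1, h2]
      exact hDcard
    have hVuppos : ∀ v ∈ Vup, (0:ℝ) < θ + (v : ℝ) - 1 := by
      intro v hv
      rw [hVup, Multiset.mem_add] at hv
      rcases hv with hv | hv
      · obtain ⟨i, hi, rfl⟩ := Multiset.mem_map.mp hv
        have hiD : i ∈ D := hi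
        have h2 := hcile i hiD
        have h1 := (hDmem i hiD).1.1
        have hge : (1 : ℤ) ≤ (i : ℤ) - crpc k i := by omega
        have hge' : (1 : ℝ) ≤ (((i : ℤ) - crpc k i : ℤ) : ℝ) := by exact_mod_cast hge
        linarith
      · obtain ⟨sp, _, rfl⟩ := Multiset.mem_map.mp hv
        have := hbig sp.1
        have hc : (((k sp.1 (Fin.last N) : ℤ) - ((r : ℤ) + 1) * N : ℤ) : ℝ)
            = (k sp.1 (Fin.last N) : ℝ) - ((r : ℝ) + 1) * N := by push_cast; ring
        rw [hc]
        linarith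
    have hVupub : ∀ v ∈ Vup, v ≤ (M : ℤ) := by
      intro v hv
      rw [hVup, Multiset.mem_add] at hv
      rcases hv with hv | hv
      · obtain ⟨i, hi, rfl⟩ := Multiset.mem_map.mp hv
        have hiD : i ∈ D := hi
        have := (hDmem i hiD).1.2
        omega
      · obtain ⟨sp, _, rfl⟩ := Multiset.mem_map.mp hv
        have h1 := hmM sp.1
        have h2 : (0 : ℤ) ≤ ((r : ℤ) + 1) * N := by positivity
        omega
    have hVupcnt : ∀ x : ℕ, 1 ≤ x → x ≤ M →
        (Vup.filter (fun v => (x : ℤ) ≤ v)).card + x ≤ M + 1 := by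
      intro x hx1 hxM
      rw [hVup, Multiset.filter_add, Multiset.card_add]
      have h1 : (Multiset.filter (fun v => (x : ℤ) ≤ v)
          (D.val.map (fun i : ℕ => (i : ℤ) - crpc k i))).card
          = (D.filter (fun i => x + crpc k i ≤ i)).card := by
        rw [← Multiset.countP_eq_card_filter, Multiset.countP_map]
        have he : D.val.filter (fun i : ℕ => (x : ℤ) ≤ (i : ℤ) - crpc k i)
            = D.val.filter (fun i : ℕ => x + crpc k i ≤ i) :=
          Multiset.filter_congr (fun i _ => by omega)
        rw [he]
        rfl
      have h2 : (Multiset.filter (fun v => (x : ℤ) ≤ v)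
          ((univ : Finset (Fin r × Fin (N + 1))).val.map
            (fun sp : Fin r × Fin (N + 1) => (k sp.1 (Fin.last N) : ℤ) - ((r : ℤ) + 1) * N))).card
          = ((univ : Finset (Fin r × Fin (N + 1))).filter
            (fun sp => x + (r + 1) * N ≤ k sp.1 (Fin.last N))).card := by
        rw [← Multiset.countP_eq_card_filter, Multiset.countP_map]
        have he : (univ : Finset (Fin r × Fin (N + 1))).val.filter
            (fun sp : Fin r × Fin (N + 1) =>
              (x : ℤ) ≤ (k sp.1 (Fin.last N) : ℤ) - ((r : ℤ) + 1) * N)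
            = (univ : Finset (Fin r × Fin (N + 1))).val.filter
              (fun sp : Fin r × Fin (N + 1) => x + (r + 1) * N ≤ k sp.1 (Fin.last N)) := by
          apply Multiset.filter_congr
          intro sp _
          have hc : ((r : ℤ) + 1) * N = (((r + 1) * N : ℕ) : ℤ) := by push_cast; ring
          rw [hc]
          omega
        rw [he]
        rfl
      rw [h1, h2, hD]
      exact count_key_up k hdisj hpos hmono M hmM x hx1 hxM
    have hVupprod : (Vup.map (fun v : ℤ => θ + (v : ℝ) - 1)).prod = nD * Xu := by
      rw [hVup, Multiset.map_add, Multiset.prod_add, Multiset.map_map, Multiset.map_map]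
      congr 1
      · rw [show (D.val.map ((fun v : ℤ => θ + (v : ℝ) - 1) ∘ (fun i : ℕ => (i : ℤ) - crpc k i))).prod
          = ∏ i ∈ D, (θ + (((i : ℤ) - crpc k i : ℤ) : ℝ) - 1) from
            (Finset.prod_eq_multiset_prod D _).symm]
        apply Finset.prod_congr rfl
        intro i _
        push_cast
        ring
      · rw [show ((univ : Finset (Fin r × Fin (N + 1))).val.map
            ((fun v : ℤ => θ + (v : ℝ) - 1) ∘
              (fun sp : Fin r × Fin (N + 1) => (k sp.1 (Fin.last N) : ℤ) - ((r : ℤ) + 1) * N))).prod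
          = ∏ sp : Fin r × Fin (N + 1),
              (θ + (((k sp.1 (Fin.last N) : ℤ) - ((r : ℤ) + 1) * N : ℤ) : ℝ) - 1) from
            (Finset.prod_eq_multiset_prod _ _).symm]
        rw [Fintype.prod_prod_type, hXu]
        apply Finset.prod_congr rfl
        intro s _
        have hc : ∀ p : Fin (N + 1),
            (θ + (((k (s, p).1 (Fin.last N) : ℤ) - ((r : ℤ) + 1) * N : ℤ) : ℝ) - 1)
            = θ + (k s (Fin.last N) : ℝ) - ((r : ℝ) + 1) * N - 1 := by
          intro p; push_cast; ring
        rw [Finset.prod_congr rfl (fun p _ => hc p), Finset.prod_const, Finset.card_univ,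
          Fintype.card_fin]
    have hkey2 : nD * Xu ≤ ∏ i ∈ Icc 1 M, (θ + (i : ℝ) - 1) := by
      rw [← hrange, ← hVupprod]
      exact ms_prod_ge θ M Vup hVupcard hVuppos hVupub hVupcnt
    rw [div_mul_div_comm, div_le_div_iff₀ (mul_pos hdDpos hdPpos) hXupos]
    calc nD * (θ * ↑N.factorial) ^ r * Xu
        = (θ * ↑N.factorial) ^ r * (nD * Xu) := by ring
      _ ≤ (θ * ↑N.factorial) ^ r * ∏ i ∈ Icc 1 M, (θ + (i : ℝ) - 1) :=
          mul_le_mul_of_nonneg_left hkey2 (le_of_lt hAr)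
      _ = (θ * ↑N.factorial) ^ r * (dD * dP) := by rw [hIccprod]
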